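/- Let k be a field and let φ : k⟦x₁,…,xₙ⟧ → k⟦u₁,…,u_m⟧ be a morphism of formal power series rings. Write x′ = (x₁,…,x_{n−1}) and suppose that f = xₙ^d + a₁(x′)xₙ^{d−1} + ⋯ + a_d(x′), with a_i ∈ k⟦x′⟧ and a_i(0) = 0, is a generator of ker φ. Then: (1) f is the unique such element of ker φ: if g = xₙ^d + b₁(x′)xₙ^{d−1} + ⋯ + b_d(x′) with b_i ∈ k⟦x′⟧, b_i(0) = 0, satisfies φ(g) = 0, then g = f. (2) There exists a function μ : ℕ → ℕ such that for every k ∈ ℕ and every g = xₙ^d + b₁(x′)xₙ^{d−1} + ⋯ + b_d(x′) with b_i ∈ k⟦x′⟧, b_i(0) = 0, and φ(g) ∈ (u)^{μ(k)}, the coefficients of the b_i agree with those of the a_i up to degree k: writing a_i = Σ_β a_{i,β} x′^β and b_i = Σ_β b_{i,β} x′^β, one has b_{i,β} = a_{i,β} for all i = 1,…,d and all multi-indices β with |β| ≤ k. -/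

import Mathlib

open Filter Topology Set

noncomputable section

namespace Paper

variable {K : Type} [RCLike K]

/-! ### Ranks of analytic maps between Euclidean spaces -/

/-- The rank of the differential of `f` at the point `q`. -/
def diffRank {m n : ℕ} (f : (Fin m → K) → (Fin n → K)) (q : Fin m → K) : ℕ :=
  Module.finrank K (LinearMap.range (fderiv K f q : (Fin m → K) →ₗ[K] (Fin n → K)))

/-- The generic rank of `f` at `p` : the maximum, over points `q` in arbitrarily small
neighborhoods of `p`, of the rank of the differential of `f` at `q`. -/
def genericRank {m n : ℕ} (f : (Fin m → K) → (Fin n → K)) (p : Fin m → K) : ℕ :=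
  sInf { r : ℕ | ∃ U ∈ 𝓝 p, r = sSup (diffRank f '' U) }

/-- Partial derivative in the direction of the `j`-th coordinate. -/
def pderivK {m : ℕ} (j : Fin m) (f : (Fin m → K) → K) : (Fin m → K) → K :=
  fun q => fderiv K f q (Pi.single j 1)

/-- Iterated partial derivative in the direction of the `j`-th coordinate. -/
def pderivIter {m : ℕ} (j : Fin m) : ℕ → ((Fin m → K) → K) → ((Fin m → K) → K)
  | 0, f => f
  | k + 1, f => pderivK j (pderivIter j k f)

/-- Iterated partial derivative `∂^γ`. -/
def mpderiv {m : ℕ} (γ : Fin m →₀ ℕ) (f : (Fin m → K) → K) : (Fin m → K) → K :=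
  (List.finRange m).foldr (fun j g => pderivIter j (γ j) g) f

/-- Taylor coefficient `(1/γ!) ∂^γ f (p)`. -/
def taylorCoeff {m : ℕ} (f : (Fin m → K) → K) (p : Fin m → K) (γ : Fin m →₀ ℕ) : K :=
  (((∏ j, Nat.factorial (γ j) : ℕ) : K))⁻¹ * mpderiv γ f p

/-- The Taylor series of `f` at `p`, as a formal multivariate power series. -/
def taylorSeriesAt {m : ℕ} (f : (Fin m → K) → K) (p : Fin m → K) :
    MvPowerSeries (Fin m) K :=
  fun γ => taylorCoeff f p γ

/-- The exponent `δ ↦ N` with all coordinates equal to `N`. -/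
def expBound (n N : ℕ) : Fin n →₀ ℕ := Finsupp.equivFunOnFinite.symm (fun _ => N)

/-- Substitution of the family of power series `a` (each having zero constant term) in the
power series `F`.  The coefficient of `u^γ` in `F(a)` is
`∑ over δ of (coeff δ F) * coeff γ (a^δ)`; only exponents `δ` with `|δ| ≤ |γ|` contribute. -/
def msubst {R : Type*} [CommRing R] {m n : ℕ} (a : Fin n → MvPowerSeries (Fin m) R)
    (F : MvPowerSeries (Fin n) R) : MvPowerSeries (Fin m) R :=
  fun γ => ∑ δ ∈ Finset.Iic (expBound n (γ.sum fun _ e => e)),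
      (MvPowerSeries.coeff δ F) * MvPowerSeries.coeff γ (∏ i, a i ^ δ i)

/-- The Krull dimension of the set of prime ideals containing `S`; when `S` is an ideal of `R`,
this is the Krull dimension of the quotient ring `R/S`. -/
def dimOfPrimesOver {R : Type*} [CommRing R] (S : Set R) : WithBot ℕ∞ :=
  Order.krullDim { p : PrimeSpectrum R // S ⊆ p.asIdeal }

/-- The germ of `f` at `p`, translated so that it maps `0` to `0`. -/
def centered {m n : ℕ} (f : (Fin m → K) → (Fin n → K)) (p : Fin m → K) :
    (Fin m → K) → (Fin n → K) :=
  fun u => f (p + u) - f p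

/-- The kernel of the morphism `K⟦x₁,…,xₙ⟧ → K⟦u₁,…,u_m⟧` obtained by substituting the Taylor
expansions at `p` of the components of `f` (in coordinates centred at `p` and `f p`). -/
def formalKer {m n : ℕ} (f : (Fin m → K) → (Fin n → K)) (p : Fin m → K) :
    Set (MvPowerSeries (Fin n) K) :=
  { F | msubst (fun i => taylorSeriesAt (fun u => centered f p u i) 0) F = 0 }

/-- The formal rank of `f` at `p` : the Krull dimension of `K⟦x⟧/ker(f̂*_p)`. -/
def formalRank {m n : ℕ} (f : (Fin m → K) → (Fin n → K)) (p : Fin m → K) : WithBot ℕ∞ :=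
  dimOfPrimesOver (formalKer f p)

/-- `f` is regular at `p` in the sense of Gabrielov if its generic rank equals its formal
rank at `p`. -/
def GabrielovRegularAt {m n : ℕ} (f : (Fin m → K) → (Fin n → K)) (p : Fin m → K) : Prop :=
  (genericRank f p : WithBot ℕ∞) = formalRank f p

/-! ### Rings of germs of analytic functions and the analytic rank -/

/-- The ring `O_p` of germs at `p` of `K`-analytic functions, as a subring of the ring of all
germs of functions at `p`. -/
def analyticGermRing (K : Type) [RCLike K] {m : ℕ} (p : Fin m → K) :
    Subring ((𝓝 p).Germ K) where
  carrier := { g | ∃ f : (Fin m → K) → K, AnalyticAt K f p ∧ g = (f : (𝓝 p).Germ K) }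
  mul_mem' := by
    rintro a b ⟨f, hf, rfl⟩ ⟨g, hg, rfl⟩
    exact ⟨f * g, hf.mul hg, (Filter.Germ.coe_mul f g).symm⟩
  one_mem' := ⟨1, analyticAt_const, rfl⟩
  add_mem' := by
    rintro a b ⟨f, hf, rfl⟩ ⟨g, hg, rfl⟩
    exact ⟨f + g, hf.add hg, (Filter.Germ.coe_add f g).symm⟩
  zero_mem' := ⟨0, analyticAt_const, rfl⟩
  neg_mem' := by
    rintro a ⟨f, hf, rfl⟩
    exact ⟨-f, hf.neg, (Filter.Germ.coe_neg f).symm⟩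

/-- The kernel of the pullback morphism `f*_p : O_{f(p)} → O_p`, `g ↦ g ∘ f`. -/
def analyticKer {m n : ℕ} (f : (Fin m → K) → (Fin n → K)) (p : Fin m → K) :
    Set ↥(analyticGermRing K (f p)) :=
  { g | ∃ h : (Fin n → K) → K, AnalyticAt K h (f p) ∧
        (g : (𝓝 (f p)).Germ K) = (h : (𝓝 (f p)).Germ K) ∧ ∀ᶠ x in 𝓝 p, h (f x) = 0 }

/-- The analytic rank of `f` at `p` : the Krull dimension of `O_{f(p)}/ker(f*_p)`. -/
def analyticRank {m n : ℕ} (f : (Fin m → K) → (Fin n → K)) (p : Fin m → K) : WithBot ℕ∞ :=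
  dimOfPrimesOver (analyticKer f p)

/-! ### Analytic manifolds, modeled on `Fin l → K`, via charted spaces -/

/-- The image of the point `a` in the chart at `a`. -/
def chBase (K : Type) [RCLike K] (l : ℕ) {M : Type*} [TopologicalSpace M]
    [ChartedSpace (Fin l → K) M] (a : M) : Fin l → K :=
  chartAt (Fin l → K) a a

/-- The local representative of `f : M → N` in the charts at `a` and `f a`. -/
def chRep (K : Type) [RCLike K] (l l' : ℕ) {M N : Type*} [TopologicalSpace M]
    [ChartedSpace (Fin l → K) M] [TopologicalSpace N] [ChartedSpace (Fin l' → K) N]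
    (f : M → N) (a : M) : (Fin l → K) → (Fin l' → K) :=
  (chartAt (Fin l' → K) (f a)) ∘ f ∘ (chartAt (Fin l → K) a).symm

/-- `M` is a `K`-analytic manifold: all transition maps of the atlas are analytic. -/
def AnalyticCharts (K : Type) [RCLike K] (l : ℕ) (M : Type*) [TopologicalSpace M]
    [ChartedSpace (Fin l → K) M] : Prop :=
  ∀ x y : M, ∀ z ∈ (chartAt (Fin l → K) x).target ∩
      ((chartAt (Fin l → K) x).symm ⁻¹' (chartAt (Fin l → K) y).source),
    AnalyticAt K ((chartAt (Fin l → K) y) ∘ (chartAt (Fin l → K) x).symm) z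

/-- A map between analytic manifolds is analytic at `a` if it is continuous at `a` and its local
representative in charts is analytic. -/
def MAnalyticAt (K : Type) [RCLike K] (l l' : ℕ) {M N : Type*} [TopologicalSpace M]
    [ChartedSpace (Fin l → K) M] [TopologicalSpace N] [ChartedSpace (Fin l' → K) N]
    (f : M → N) (a : M) : Prop :=
  ContinuousAt f a ∧ AnalyticAt K (chRep K l l' f a) (chBase K l a)

/-- A `K`-valued function on a manifold is analytic at `a` if its representative in the chart
at `a` is analytic. -/
def MAnalyticFunAt {K : Type} [RCLike K] (l : ℕ) {M : Type*} [TopologicalSpace M]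
    [ChartedSpace (Fin l → K) M] (f : M → K) (a : M) : Prop :=
  AnalyticAt K (f ∘ (chartAt (Fin l → K) a).symm) (chBase K l a)

/-- `f : M → N` is regular at `a` in the sense of Gabrielov: its generic rank at `a` equals its
formal rank at `a` (both computed on its local representative in charts). -/
def MRegularAt (K : Type) [RCLike K] (l l' : ℕ) {M N : Type*} [TopologicalSpace M]
    [ChartedSpace (Fin l → K) M] [TopologicalSpace N] [ChartedSpace (Fin l' → K) N]
    (f : M → N) (a : M) : Prop :=
  GabrielovRegularAt (chRep K l l' f a) (chBase K l a)

/-- The generic rank of `f : M → N` at `a`. -/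
def mgenericRank (K : Type) [RCLike K] (l l' : ℕ) {M N : Type*} [TopologicalSpace M]
    [ChartedSpace (Fin l → K) M] [TopologicalSpace N] [ChartedSpace (Fin l' → K) N]
    (f : M → N) (a : M) : ℕ :=
  genericRank (chRep K l l' f a) (chBase K l a)

/-- The formal rank of `f : M → N` at `a`. -/
def mformalRank (K : Type) [RCLike K] (l l' : ℕ) {M N : Type*} [TopologicalSpace M]
    [ChartedSpace (Fin l → K) M] [TopologicalSpace N] [ChartedSpace (Fin l' → K) N]
    (f : M → N) (a : M) : WithBot ℕ∞ :=
  formalRank (chRep K l l' f a) (chBase K l a)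

/-- The analytic rank of `f : M → N` at `a`. -/
def manalyticRank (K : Type) [RCLike K] (l l' : ℕ) {M N : Type*} [TopologicalSpace M]
    [ChartedSpace (Fin l → K) M] [TopologicalSpace N] [ChartedSpace (Fin l' → K) N]
    (f : M → N) (a : M) : WithBot ℕ∞ :=
  analyticRank (chRep K l l' f a) (chBase K l a)

/-- A subset `Z` of a manifold `M` is an analytic subset if every point of `M` has an open
neighborhood `U` and finitely many analytic functions on `U` whose common zero set is `Z ∩ U`. -/
def IsAnalyticSet (K : Type) [RCLike K] (l : ℕ) {M : Type*} [TopologicalSpace M]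
    [ChartedSpace (Fin l → K) M] (Z : Set M) : Prop :=
  ∀ a : M, ∃ U : Set M, IsOpen U ∧ a ∈ U ∧ ∃ s : ℕ, ∃ f : Fin s → M → K,
    (∀ i, ∀ x ∈ U, MAnalyticFunAt l (f i) x) ∧ Z ∩ U = { x ∈ U | ∀ i, f i x = 0 }

/-- A subset `Z` of an open set `Ω ⊆ K^m` is an analytic subset of `Ω`. -/
def IsAnalyticSubsetIn {K : Type} [RCLike K] {m : ℕ} (Ω Z : Set (Fin m → K)) : Prop :=
  Z ⊆ Ω ∧ ∀ p ∈ Ω, ∃ V : Set (Fin m → K), IsOpen V ∧ p ∈ V ∧ V ⊆ Ω ∧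
    ∃ s : ℕ, ∃ f : Fin s → (Fin m → K) → K,
      (∀ i, ∀ x ∈ V, AnalyticAt K (f i) x) ∧ Z ∩ V = { x ∈ V | ∀ i, f i x = 0 }

/-- A proper map: preimages of compact sets are compact. -/
def ProperMap {M N : Type*} [TopologicalSpace M] [TopologicalSpace N] (f : M → N) : Prop :=
  ∀ C : Set N, IsCompact C → IsCompact (f ⁻¹' C)

/-! ### Semianalytic and subanalytic subsets of real analytic manifolds -/

section Real

variable (l : ℕ) {M : Type*} [TopologicalSpace M] [ChartedSpace (Fin l → ℝ) M]

/-- A semianalytic subset of a real analytic manifold. -/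
def Semianalytic (X : Set M) : Prop :=
  ∀ a : M, ∃ U : Set M, IsOpen U ∧ a ∈ U ∧ ∃ p q : ℕ,
    ∃ f : Fin p → M → ℝ, ∃ g : Fin p → Fin q → M → ℝ,
      (∀ i, ∀ x ∈ U, MAnalyticFunAt l (f i) x) ∧
      (∀ i j, ∀ x ∈ U, MAnalyticFunAt l (g i j) x) ∧
      X ∩ U = ⋃ i, { x ∈ U | f i x = 0 ∧ ∀ j, 0 < g i j x }

/-- Analyticity at a point for real valued functions on `M × ℝ^q` (chart on the first factor,
identity on the second). -/
def ProdAnalyticFunAt {q : ℕ} (f : M × (Fin q → ℝ) → ℝ) (z : M × (Fin q → ℝ)) : Prop :=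
  AnalyticAt ℝ (fun y : (Fin l → ℝ) × (Fin q → ℝ) => f ((chartAt (Fin l → ℝ) z.1).symm y.1, y.2))
    (chartAt (Fin l → ℝ) z.1 z.1, z.2)

/-- A semianalytic subset of `M × ℝ^q`. -/
def SemianalyticProd {q : ℕ} (S : Set (M × (Fin q → ℝ))) : Prop :=
  ∀ a : M × (Fin q → ℝ), ∃ U : Set (M × (Fin q → ℝ)), IsOpen U ∧ a ∈ U ∧ ∃ p r : ℕ,
    ∃ f : Fin p → M × (Fin q → ℝ) → ℝ, ∃ g : Fin p → Fin r → M × (Fin q → ℝ) → ℝ,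
      (∀ i, ∀ x ∈ U, ProdAnalyticFunAt l (f i) x) ∧
      (∀ i j, ∀ x ∈ U, ProdAnalyticFunAt l (g i j) x) ∧
      S ∩ U = ⋃ i, { x ∈ U | f i x = 0 ∧ ∀ j, 0 < g i j x }

/-- A subanalytic subset of a real analytic manifold: locally the projection of a relatively
compact semianalytic subset of `M × ℝ^q`. -/
def Subanalytic (X : Set M) : Prop :=
  ∀ a : M, ∃ U : Set M, IsOpen U ∧ a ∈ U ∧ ∃ q : ℕ, ∃ S : Set (M × (Fin q → ℝ)),
    SemianalyticProd l S ∧ IsCompact (closure S) ∧ X ∩ U = Prod.fst '' S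

/-- `S ⊆ ℝ^l` is, near the point `p`, a `k`-dimensional analytic submanifold: locally it is the
zero set of `l - k` analytic functions with linearly independent differentials. -/
def EuclidSubmanifoldAt (S : Set (Fin l → ℝ)) (k : ℕ) (p : Fin l → ℝ) : Prop :=
  k ≤ l ∧ ∃ V : Set (Fin l → ℝ), IsOpen V ∧ p ∈ V ∧
    ∃ h : Fin (l - k) → (Fin l → ℝ) → ℝ,
      (∀ i, ∀ x ∈ V, AnalyticAt ℝ (h i) x) ∧
      (∀ x ∈ V, LinearIndependent ℝ (fun i => fderiv ℝ (h i) x)) ∧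
      S ∩ V = { x ∈ V | ∀ i, h i x = 0 }

/-- `X` is, near the point `a ∈ M`, a `k`-dimensional analytic submanifold of `M`. -/
def SubmanifoldAt (X : Set M) (k : ℕ) (a : M) : Prop :=
  ∃ U : Set M, IsOpen U ∧ a ∈ U ∧ U ⊆ (chartAt (Fin l → ℝ) a).source ∧
    ∀ x ∈ X ∩ U,
      EuclidSubmanifoldAt l ((chartAt (Fin l → ℝ) a) '' (X ∩ U)) k (chartAt (Fin l → ℝ) a x)

/-- `X^{(k)}`: the set of points of `X` near which `X` is a `k`-dimensional analytic
submanifold of `M`. -/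
def smoothPts (X : Set M) (k : ℕ) : Set M :=
  { a | a ∈ X ∧ SubmanifoldAt l X k a }

/-- The dimension of a subanalytic set: the largest `k` such that `X^{(k)} ≠ ∅`
(`⊥` if there is no such `k`). -/
def sdim (X : Set M) : WithBot ℕ∞ :=
  ⨆ k ∈ { k : ℕ | (smoothPts l X k).Nonempty }, (k : WithBot ℕ∞)

/-- `Σ^{(k)}`: the closure of `X^{(k)}` intersected with `X`. -/
def strat (X : Set M) (k : ℕ) : Set M :=
  closure (smoothPts l X k) ∩ X

/-- The germ of `X` at `a` is contained in the germ of `Y` at `a`. -/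
def germSubset {M : Type*} [TopologicalSpace M] (X Y : Set M) (a : M) : Prop :=
  ∃ U ∈ 𝓝 a, X ∩ U ⊆ Y

/-- The germs of `X` and `Y` at `a` coincide. -/
def germEq {M : Type*} [TopologicalSpace M] (X Y : Set M) (a : M) : Prop :=
  ∃ U ∈ 𝓝 a, X ∩ U = Y ∩ U

/-- The dimension of the germ of `X` at `a`. -/
def germDim (X : Set M) (a : M) : WithBot ℕ∞ :=
  ⨅ U ∈ 𝓝 a, sdim l (X ∩ U)

/-- A set `X` of pure dimension is Nash at `a` if there is a germ of a semianalytic set at `a`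
containing the germ of `X` and of the same dimension. -/
def NashAtPure (X : Set M) (a : M) : Prop :=
  ∃ Y : Set M, Semianalytic l Y ∧ germSubset X Y a ∧ germDim l Y a = germDim l X a

/-- A subanalytic set `X` is Nash at `a` if each pure-dimensional part `Σ^{(k)}` of `X`
is Nash at `a`. -/
def NashAt (X : Set M) (a : M) : Prop :=
  ∀ k : ℕ, NashAtPure l (strat l X k) a

/-- `𝒩(X)`: the set of points at which `X` is Nash. -/
def NashPoints (X : Set M) : Set M :=
  { a | NashAt l X a }

/-- `𝒮𝒜(X)`: the set of points at which the germ of `X` is semianalytic. -/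
def SAPoints (X : Set M) : Set M :=
  { a | ∃ Y : Set M, Semianalytic l Y ∧ germEq X Y a }

end Real

/-! ### Admissible families of analytic germs -/

/-- The admissible family `Ψ_a(u) = Φ(φ(a)+u) − Φ(φ(a))` associated to `Φ` and `φ`. -/
def Psi {K : Type} [RCLike K] {l m n : ℕ} (Φ : (Fin m → K) → (Fin n → K))
    (φ : (Fin l → K) → (Fin m → K)) (a : Fin l → K) : (Fin m → K) → (Fin n → K) :=
  fun u => Φ (φ a + u) - Φ (φ a)

/-- The ring `O(Λ)` of analytic functions on `Λ`: functions on `Λ` which extend to a function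
analytic at every point of `Λ`. -/
def Oring {K : Type} [RCLike K] {l : ℕ} (Λ : Set (Fin l → K)) : Subring (↥Λ → K) where
  carrier := { f | ∃ g : (Fin l → K) → K, (∀ x ∈ Λ, AnalyticAt K g x) ∧ ∀ a : ↥Λ, f a = g ↑a }
  mul_mem' := by
    rintro f₁ f₂ ⟨g₁, h₁, e₁⟩ ⟨g₂, h₂, e₂⟩
    exact ⟨g₁ * g₂, fun x hx => (h₁ x hx).mul (h₂ x hx), fun a => by
      simp [Pi.mul_apply, e₁ a, e₂ a]⟩
  one_mem' := ⟨1, fun x _ => analyticAt_const, fun a => rfl⟩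
  add_mem' := by
    rintro f₁ f₂ ⟨g₁, h₁, e₁⟩ ⟨g₂, h₂, e₂⟩
    exact ⟨g₁ + g₂, fun x hx => (h₁ x hx).add (h₂ x hx), fun a => by
      simp [Pi.add_apply, e₁ a, e₂ a]⟩
  zero_mem' := ⟨0, fun x _ => analyticAt_const, fun a => rfl⟩
  neg_mem' := by
    rintro f ⟨g, h, e⟩
    exact ⟨-g, fun x hx => (h x hx).neg, fun a => by simp [Pi.neg_apply, e a]⟩

/-- The coefficient `F_{i,γ} = (1/γ!) ∂^γ (x_i ∘ Φ) ∘ φ`, as a function on `Λ`. -/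
def PsiLcoeffFun {K : Type} [RCLike K] {l m n : ℕ} (Φ : (Fin m → K) → (Fin n → K))
    (φ : (Fin l → K) → (Fin m → K)) (Λ : Set (Fin l → K)) (i : Fin n) (γ : Fin m →₀ ℕ) :
    ↥Λ → K :=
  fun a => taylorCoeff (fun w => Φ w i) (φ ↑a) γ

open scoped Classical in
/-- The coefficient `F_{i,γ}` as an element of `L = Frac(O(Λ))`. -/
def PsiLcoeff {K : Type} [RCLike K] {l m n : ℕ} (Φ : (Fin m → K) → (Fin n → K))
    (φ : (Fin l → K) → (Fin m → K)) (Λ : Set (Fin l → K)) (i : Fin n) (γ : Fin m →₀ ℕ) :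
    FractionRing ↥(Oring Λ) :=
  if h : PsiLcoeffFun Φ φ Λ i γ ∈ Oring Λ then
    algebraMap ↥(Oring Λ) (FractionRing ↥(Oring Λ)) ⟨PsiLcoeffFun Φ φ Λ i γ, h⟩
  else 0

/-- The power series `Ψ*_L(x_i) = ∑_{γ ≠ 0} F_{i,γ} u^γ ∈ L⟦u⟧`. -/
def PsiLseries {K : Type} [RCLike K] {l m n : ℕ} (Φ : (Fin m → K) → (Fin n → K))
    (φ : (Fin l → K) → (Fin m → K)) (Λ : Set (Fin l → K)) (i : Fin n) :
    MvPowerSeries (Fin m) (FractionRing ↥(Oring Λ)) :=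
  fun γ => if γ = 0 then 0 else PsiLcoeff Φ φ Λ i γ

/-- Formal partial derivative of a multivariate power series. -/
def formalPDeriv {R : Type*} [CommRing R] {m : ℕ} (i : Fin m) (F : MvPowerSeries (Fin m) R) :
    MvPowerSeries (Fin m) R :=
  fun γ => ((γ i + 1 : ℕ) : R) * F (γ + Finsupp.single i 1)

/-- The generic rank of `Ψ*_L`: the rank of the Jacobian matrix `[∂ Ψ*_L(x_j) / ∂ u_i]` over
the fraction field of `L⟦u⟧`. -/
def LgenericRank {K : Type} [RCLike K] {l m n : ℕ} (Φ : (Fin m → K) → (Fin n → K))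
    (φ : (Fin l → K) → (Fin m → K)) (Λ : Set (Fin l → K)) : ℕ :=
  (Matrix.of fun (i : Fin m) (j : Fin n) =>
    (algebraMap (MvPowerSeries (Fin m) (FractionRing ↥(Oring Λ)))
        (FractionRing (MvPowerSeries (Fin m) (FractionRing ↥(Oring Λ)))))
      (formalPDeriv i (PsiLseries Φ φ Λ j))).rank

/-- The kernel of `Ψ*_L : L⟦x⟧ → L⟦u⟧`. -/
def LformalKer {K : Type} [RCLike K] {l m n : ℕ} (Φ : (Fin m → K) → (Fin n → K))
    (φ : (Fin l → K) → (Fin m → K)) (Λ : Set (Fin l → K)) :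
    Set (MvPowerSeries (Fin n) (FractionRing ↥(Oring Λ))) :=
  { F | msubst (fun i => PsiLseries Φ φ Λ i) F = 0 }

/-- The formal rank of `Ψ*_L`: the Krull dimension of `L⟦x⟧ / ker(Ψ*_L)`. -/
def LformalRank {K : Type} [RCLike K] {l m n : ℕ} (Φ : (Fin m → K) → (Fin n → K))
    (φ : (Fin l → K) → (Fin m → K)) (Λ : Set (Fin l → K)) : WithBot ℕ∞ :=
  dimOfPrimesOver (LformalKer Φ φ Λ)

/-! ### Distinguished polynomials in `R⟦x₁,…,xₙ⟧[y]` as power series in `n+1` variables -/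

/-- Restriction of an exponent on `n+1` variables to the first `n` variables. -/
def finRestrict {n : ℕ} (γ : Fin (n+1) →₀ ℕ) : Fin n →₀ ℕ :=
  Finsupp.equivFunOnFinite.symm (fun j => γ j.castSucc)

/-- The monic polynomial `y^d + ∑_{i=0}^{d-1} (∑_β c i β x^β) y^i` — where `c i` is the
coefficient of `y^{d-1-i}` — as a power series in the `n+1` variables `(x₁,…,xₙ,y)`,
`y` being the last variable. -/
def wpoly {R : Type*} [CommRing R] {n : ℕ} (d : ℕ) (c : Fin d → (Fin n →₀ ℕ) → R) :
    MvPowerSeries (Fin (n+1)) R :=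
  fun γ =>
    if he : γ (Fin.last n) < d then c ⟨d - 1 - γ (Fin.last n), by omega⟩ (finRestrict γ)
    else if γ (Fin.last n) = d ∧ finRestrict γ = 0 then 1 else 0

open scoped Classical in
/-- An analytic function on `Λ`, viewed as an element of `L = Frac(O(Λ))`. -/
def Lelem {K : Type} [RCLike K] {l : ℕ} (Λ : Set (Fin l → K)) (g : (Fin l → K) → K) :
    FractionRing ↥(Oring Λ) :=
  if h : (fun a : ↥Λ => g ↑a) ∈ Oring Λ then
    algebraMap ↥(Oring Λ) (FractionRing ↥(Oring Λ)) ⟨fun a : ↥Λ => g ↑a, h⟩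
  else 0

/-! ### Identification of `ℂ^m` with `ℝ^{2m}` -/

/-- The standard identification `ℝ^{2m} → ℂ^m`. -/
def toC (m : ℕ) (v : Fin (2*m) → ℝ) : Fin m → ℂ :=
  fun j => (v ⟨2*j.1, by have := j.2; omega⟩ : ℝ) + (v ⟨2*j.1+1, by have := j.2; omega⟩ : ℝ) * Complex.I

/-- The standard identification `ℂ^n → ℝ^{2n}`. -/
def toR (n : ℕ) (w : Fin n → ℂ) : Fin (2*n) → ℝ :=
  fun i => if i.1 % 2 = 0 then (w ⟨i.1 / 2, by have := i.2; omega⟩).re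
           else (w ⟨i.1 / 2, by have := i.2; omega⟩).im

/-! ### Miscellaneous -/

/-- The semialgebraic diffeomorphism `x ↦ x / √(1+‖x‖²)` of `ℝⁿ` onto the open unit ball. -/
def stereo (n : ℕ) : (Fin n → ℝ) → (Fin n → ℝ) :=
  fun x i => x i / Real.sqrt (1 + ∑ j, (x j) ^ 2)

/-- A finitely subanalytic subset of `ℝⁿ`. -/
def FinitelySubanalytic (n : ℕ) (X : Set (Fin n → ℝ)) : Prop :=
  Subanalytic n (stereo n '' X)

/-- A real analytic manifold of dimension `k`, as a bundled charted space with analytic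
transition maps. -/
structure RealAnalyticManifold (k : ℕ) where
  /-- the underlying set of the manifold -/
  carrier : Type
  [topInst : TopologicalSpace carrier]
  [csInst : ChartedSpace (Fin k → ℝ) carrier]
  t2 : T2Space carrier
  analytic : AnalyticCharts ℝ k carrier

attribute [instance] RealAnalyticManifold.topInst RealAnalyticManifold.csInst

namespace ChevAux

/-- Total degree of an exponent. -/
def tdeg {k : ℕ} (γ : Fin k →₀ ℕ) : ℕ := γ.sum fun _ e => e

lemma tdeg_add {k : ℕ} (s t : Fin k →₀ ℕ) : tdeg (s + t) = tdeg s + tdeg t :=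
  Finsupp.sum_add_index' (fun _ => rfl) (fun _ _ _ => rfl)

lemma eq_zero_of_tdeg_eq_zero {k : ℕ} {γ : Fin k →₀ ℕ} (h : tdeg γ = 0) : γ = 0 := by
  unfold tdeg Finsupp.sum at h
  ext j
  rcases Nat.eq_zero_or_pos (γ j) with h0 | hpos
  · simpa using h0
  · exact absurd (Finset.sum_eq_zero_iff.mp h j (Finsupp.mem_support_iff.mpr hpos.ne'))
      hpos.ne'

lemma one_le_tdeg {k : ℕ} {γ : Fin k →₀ ℕ} (h : γ ≠ 0) : 1 ≤ tdeg γ := by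
  rcases Nat.eq_zero_or_pos (tdeg γ) with h0 | hpos
  · exact absurd (eq_zero_of_tdeg_eq_zero h0) h
  · exact hpos

lemma apply_le_tdeg {k : ℕ} (γ : Fin k →₀ ℕ) (j : Fin k) : γ j ≤ tdeg γ := by
  rcases Nat.eq_zero_or_pos (γ j) with h0 | hpos
  · omega
  · exact Finset.single_le_sum (f := fun a => γ a) (fun _ _ => Nat.zero_le _)
      (Finsupp.mem_support_iff.mpr hpos.ne')

variable {𝕂 : Type} [Field 𝕂] {m : ℕ}

/-- The ideal of power series all of whose coefficients in degree `< N` vanish. -/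
def lowIdeal (𝕂 : Type) [Field 𝕂] (m N : ℕ) : Ideal (MvPowerSeries (Fin m) 𝕂) where
  carrier := {F | ∀ γ : Fin m →₀ ℕ, tdeg γ < N → MvPowerSeries.coeff γ F = 0}
  add_mem' := by intro a b ha hb γ hγ; simp [map_add, ha γ hγ, hb γ hγ]
  zero_mem' := by intro γ hγ; simp
  smul_mem' := by
    classical
    intro r F hF γ hγ
    rw [smul_eq_mul, MvPowerSeries.coeff_mul]
    apply Finset.sum_eq_zero
    rintro ⟨s, t⟩ hst
    rw [Finset.HasAntidiagonal.mem_antidiagonal] at hst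
    have ht : tdeg t < N := by
      have := tdeg_add s t; rw [hst] at this; omega
    rw [hF t ht, mul_zero]

lemma mem_lowIdeal {N : ℕ} {F : MvPowerSeries (Fin m) 𝕂} :
    F ∈ lowIdeal 𝕂 m N ↔ ∀ γ : Fin m →₀ ℕ, tdeg γ < N → MvPowerSeries.coeff γ F = 0 :=
  Iff.rfl

lemma span_X_pow_le (N : ℕ) :
    (Ideal.span (Set.range (MvPowerSeries.X : Fin m → MvPowerSeries (Fin m) 𝕂))) ^ N ≤
      lowIdeal 𝕂 m N := by
  classical
  induction N with
  | zero => intro F _ γ hγ; omega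
  | succ N ih =>
    rw [pow_succ]
    refine Ideal.mul_le.mpr (fun F hF G hG => ?_)
    intro γ hγ
    rw [MvPowerSeries.coeff_mul]
    apply Finset.sum_eq_zero
    rintro ⟨s, t⟩ hst
    rw [Finset.HasAntidiagonal.mem_antidiagonal] at hst
    have hadd : tdeg s + tdeg t = tdeg γ := by rw [← tdeg_add, hst]
    by_cases hs : tdeg s < N
    · rw [ih hF s hs, zero_mul]
    · have ht : tdeg t = 0 := by omega
      have ht0 : t = 0 := eq_zero_of_tdeg_eq_zero ht
      subst ht0
      have hG0 : MvPowerSeries.coeff 0 G = 0 := by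
        have hle : Ideal.span (Set.range (MvPowerSeries.X : Fin m → MvPowerSeries (Fin m) 𝕂)) ≤
            RingHom.ker (MvPowerSeries.constantCoeff) := by
          rw [Ideal.span_le]
          rintro _ ⟨i, rfl⟩
          simp [RingHom.mem_ker, MvPowerSeries.constantCoeff_X]
        have := hle hG
        rw [RingHom.mem_ker] at this
        simpa [MvPowerSeries.coeff_zero_eq_constantCoeff] using this
      rw [hG0, mul_zero]

lemma coeff_eq_zero_of_mem_pow {N : ℕ} {F : MvPowerSeries (Fin m) 𝕂}
    (hF : F ∈ (Ideal.span (Set.range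
      (MvPowerSeries.X : Fin m → MvPowerSeries (Fin m) 𝕂))) ^ N)
    {γ : Fin m →₀ ℕ} (hγ : tdeg γ < N) : MvPowerSeries.coeff γ F = 0 :=
  span_X_pow_le N hF γ hγ

section Comb
variable {n d : ℕ}

lemma finRestrict_apply (γ : Fin (n+1) →₀ ℕ) (j : Fin n) :
    finRestrict γ j = γ j.castSucc := by
  simp [finRestrict]

lemma finRestrict_add (p q : Fin (n+1) →₀ ℕ) :
    finRestrict (p + q) = finRestrict p + finRestrict q := by
  ext j; simp [finRestrict_apply]

lemma finRestrict_single_last (t : ℕ) :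
    finRestrict (Finsupp.single (Fin.last n) t) = 0 := by
  ext j
  rw [finRestrict_apply]
  simp [Finsupp.single_apply, (Fin.castSucc_lt_last j).ne']

lemma finsupp_ext_restrict {p q : Fin (n+1) →₀ ℕ} (h1 : finRestrict p = finRestrict q)
    (h2 : p (Fin.last n) = q (Fin.last n)) : p = q := by
  ext j
  induction j using Fin.lastCases with
  | last => exact h2
  | cast j =>
    have := congrArg (fun r => r j) h1
    simpa [finRestrict_apply] using this

/-- Uniqueness core: if `wpoly d a * h` has all coefficients in `y`-degree `≥ d` equal to
zero, then `h = 0`.  -/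
lemma eq_zero_of_mul_wpoly {𝕂 : Type} [Field 𝕂] {a : Fin d → (Fin n →₀ ℕ) → 𝕂}
    (ha0 : ∀ i, a i 0 = 0) {h : MvPowerSeries (Fin (n+1)) 𝕂}
    (hw : ∀ γ : Fin (n+1) →₀ ℕ, d ≤ γ (Fin.last n) →
      MvPowerSeries.coeff γ (wpoly d a * h) = 0) :
    h = 0 := by
  classical
  have key : ∀ s : ℕ, ∀ α : Fin (n+1) →₀ ℕ, tdeg (finRestrict α) = s → h α = 0 := by
    intro s
    induction s using Nat.strong_induction_on with
    | _ s ih =>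
      intro α hα
      set γ : Fin (n+1) →₀ ℕ := α + Finsupp.single (Fin.last n) d with hγdef
      have hγlast : γ (Fin.last n) = α (Fin.last n) + d := by
        simp [hγdef, Finsupp.single_apply]
      have h0 := hw γ (by omega)
      rw [MvPowerSeries.coeff_mul] at h0
      have hmem : ((Finsupp.single (Fin.last n) d, α) : _ × _) ∈ Finset.HasAntidiagonal.antidiagonal γ := by
        rw [Finset.HasAntidiagonal.mem_antidiagonal]; exact add_comm _ _
      have hsingle : ∑ p ∈ Finset.HasAntidiagonal.antidiagonal γ,
          MvPowerSeries.coeff p.1 (wpoly d a) * MvPowerSeries.coeff p.2 h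
          = MvPowerSeries.coeff (Finsupp.single (Fin.last n) d) (wpoly d a) *
            MvPowerSeries.coeff α h := by
        refine Finset.sum_eq_single_of_mem _ hmem ?_
        rintro ⟨q, p⟩ hqp hne
        rw [Finset.HasAntidiagonal.mem_antidiagonal] at hqp
        have hq : MvPowerSeries.coeff q (wpoly d a) = wpoly d a q := rfl
        by_cases hql : q (Fin.last n) < d
        · by_cases hqr : finRestrict q = 0
          · have : wpoly d a q = 0 := by
              rw [wpoly, dif_pos hql, hqr]; exact ha0 _
            rw [hq, this, zero_mul]
          · -- tdeg (finRestrict p) < s, use ih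
            have hradd : finRestrict q + finRestrict p = finRestrict α := by
              rw [← finRestrict_add, hqp, hγdef, finRestrict_add,
                finRestrict_single_last, add_zero]
            have h1 : 1 ≤ tdeg (finRestrict q) := one_le_tdeg hqr
            have h2 : tdeg (finRestrict q) + tdeg (finRestrict p) = s := by
              rw [← tdeg_add, hradd, hα]
            have hp0 : h p = 0 := ih (tdeg (finRestrict p)) (by omega) p rfl
            have : MvPowerSeries.coeff p h = 0 := hp0
            rw [this, mul_zero]
        · by_cases hqd : q (Fin.last n) = d ∧ finRestrict q = 0
          · exfalso
            have hqs : q = Finsupp.single (Fin.last n) d := by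
              refine finsupp_ext_restrict ?_ ?_
              · rw [hqd.2, finRestrict_single_last]
              · rw [hqd.1]; simp [Finsupp.single_apply]
            have hpα : p = α := by
              have h' : q + p = γ := hqp
              rw [hqs] at h'
              have h'' : Finsupp.single (Fin.last n) d + p
                  = Finsupp.single (Fin.last n) d + α := by
                rw [h', hγdef]; exact add_comm _ _
              exact add_left_cancel h''
            exact hne (by rw [hqs, hpα])
          · have : wpoly d a q = 0 := by rw [wpoly, dif_neg hql, if_neg hqd]
            rw [hq, this, zero_mul]
      rw [hsingle] at h0
      have hwone : MvPowerSeries.coeff (Finsupp.single (Fin.last n) d) (wpoly d a) = 1 := by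
        have h1 : (Finsupp.single (Fin.last n) d) (Fin.last n) = d := by
          simp [Finsupp.single_apply]
        show wpoly d a (Finsupp.single (Fin.last n) d) = 1
        rw [wpoly, dif_neg (by omega), if_pos ⟨h1, finRestrict_single_last d⟩]
      rw [hwone, one_mul] at h0
      exact h0
  have : ∀ α, h α = 0 := fun α => key _ α rfl
  exact MvPowerSeries.ext fun α => this α

end Comb

section LinAlg
variable {𝕂 : Type} [Field 𝕂] {m n d : ℕ}

/-- The series `∑_{i,β} c(i,β) x^β y^{d-1-i}`. -/
def Dser (𝕂 : Type) [Field 𝕂] (d n : ℕ) (c : Fin d × (Fin n →₀ ℕ) → 𝕂) :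
    MvPowerSeries (Fin (n+1)) 𝕂 :=
  fun δ => if he : δ (Fin.last n) < d then
    c (⟨d - 1 - δ (Fin.last n), by omega⟩, finRestrict δ) else 0

lemma wpoly_decomp (b a : Fin d → (Fin n →₀ ℕ) → 𝕂) :
    wpoly d b = wpoly d a + Dser 𝕂 d n (fun p => b p.1 p.2 - a p.1 p.2) := by
  refine MvPowerSeries.ext fun δ => ?_
  rw [map_add, MvPowerSeries.coeff_apply, MvPowerSeries.coeff_apply,
    MvPowerSeries.coeff_apply]
  rw [wpoly, wpoly, Dser]
  by_cases he : δ (Fin.last n) < d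
  · rw [dif_pos he, dif_pos he, dif_pos he]; ring
  · rw [dif_neg he, dif_neg he, dif_neg he, add_zero]

def embIdx (d : ℕ) {n : ℕ} (i : Fin d) (β : Fin n →₀ ℕ) : Fin (n+1) →₀ ℕ :=
  Finsupp.equivFunOnFinite.symm (Fin.snoc (β : Fin n → ℕ) (d - 1 - i.1))

lemma embIdx_last (i : Fin d) (β : Fin n →₀ ℕ) :
    embIdx d i β (Fin.last n) = d - 1 - i.1 := by
  simp [embIdx, Fin.snoc_last]

lemma finRestrict_embIdx (i : Fin d) (β : Fin n →₀ ℕ) :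
    finRestrict (embIdx d i β) = β := by
  ext j
  rw [finRestrict_apply]
  simp [embIdx, Fin.snoc_castSucc]

lemma Dser_embIdx (c : Fin d × (Fin n →₀ ℕ) → 𝕂) (i : Fin d) (β : Fin n →₀ ℕ) :
    Dser 𝕂 d n c (embIdx d i β) = c (i, β) := by
  have hd : 0 < d := i.pos
  have he : embIdx d i β (Fin.last n) < d := by rw [embIdx_last]; omega
  rw [Dser, dif_pos he]
  congr 1
  refine Prod.ext ?_ ?_
  · ext
    simp only [embIdx_last]
    have := i.2
    omega
  · exact finRestrict_embIdx i β

lemma Dser_inj0 (c : Fin d × (Fin n →₀ ℕ) → 𝕂) (h : Dser 𝕂 d n c = 0) : c = 0 := by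
  funext p
  have := congrFun h (embIdx d p.1 p.2)
  rw [Dser_embIdx] at this
  exact this

/-- The pairing between `ι →₀ 𝕂` and `ι → 𝕂`. -/
def pairL (𝕂 : Type) [Field 𝕂] (ι : Type*) :
    (ι →₀ 𝕂) →ₗ[𝕂] Module.Dual 𝕂 (ι → 𝕂) :=
  Finsupp.lsum 𝕂 fun p => (LinearMap.id : 𝕂 →ₗ[𝕂] 𝕂).smulRight (LinearMap.proj p)

lemma pairL_single {ι : Type*} (p : ι) (t : 𝕂) (c : ι → 𝕂) :
    pairL 𝕂 ι (Finsupp.single p t) c = t * c p := by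
  rw [pairL, Finsupp.lsum_single]
  simp [smul_eq_mul, mul_comm]

lemma span_pair_top {ι : Type*} (w : (Fin m →₀ ℕ) → (ι →₀ 𝕂))
    (hsep : ∀ c : ι → 𝕂, (∀ γ, pairL 𝕂 ι (w γ) c = 0) → c = 0) :
    Submodule.span 𝕂 (Set.range w) = ⊤ := by
  classical
  by_contra hne
  obtain ⟨v, hv⟩ : ∃ v : ι →₀ 𝕂, v ∉ Submodule.span 𝕂 (Set.range w) := by
    by_contra hcon
    push_neg at hcon
    exact hne (Submodule.eq_top_iff'.mpr hcon)
  set S := Submodule.span 𝕂 (Set.range w) with hS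
  have hq : (Submodule.Quotient.mk v : _ ⧸ S) ≠ 0 := by
    simpa [Submodule.Quotient.mk_eq_zero] using hv
  obtain ⟨ψ, hψ⟩ : ∃ ψ : Module.Dual 𝕂 ((ι →₀ 𝕂) ⧸ S), ψ (Submodule.Quotient.mk v) ≠ 0 := by
    by_contra hcon
    push_neg at hcon
    exact hq ((Module.forall_dual_apply_eq_zero_iff 𝕂 _).mp hcon)
  set ξ : Module.Dual 𝕂 (ι →₀ 𝕂) := ψ.comp S.mkQ with hξ
  set c : ι → 𝕂 := fun j => ξ (Finsupp.single j 1) with hc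
  have hpair : ∀ u : ι →₀ 𝕂, pairL 𝕂 ι u c = ξ u := by
    intro u
    induction u using Finsupp.induction_linear with
    | zero => simp
    | add f g hf hg => rw [map_add, map_add, LinearMap.add_apply, hf, hg]
    | single j t =>
      rw [pairL_single]
      have hsm : Finsupp.single j t = t • Finsupp.single j (1 : 𝕂) := by
        rw [Finsupp.smul_single, smul_eq_mul, mul_one]
      rw [hsm, map_smul, smul_eq_mul, hc]
  have hc0 : c = 0 := by
    refine hsep c fun γ => ?_
    rw [hpair]
    have hwγ : w γ ∈ S := Submodule.subset_span ⟨γ, rfl⟩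
    rw [hξ]
    simp [Submodule.mkQ_apply, (Submodule.Quotient.mk_eq_zero S).mpr hwγ]
  have : ξ v = 0 := by rw [← hpair v, hc0]; simp
  exact hψ (by simpa [hξ, Submodule.mkQ_apply] using this)

/-- The finitely supported representative of the functional
`c ↦ coeff γ (msubst A (Dser c))`. -/
def wrep (𝕂 : Type) [Field 𝕂] {m : ℕ} (d n : ℕ)
    (A : Fin (n+1) → MvPowerSeries (Fin m) 𝕂) (γ : Fin m →₀ ℕ) :
    (Fin d × (Fin n →₀ ℕ)) →₀ 𝕂 :=
  ∑ δ ∈ Finset.Iic (expBound (n+1) (γ.sum fun _ e => e)),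
    if he : δ (Fin.last n) < d then
      Finsupp.single (⟨d - 1 - δ (Fin.last n), by omega⟩, finRestrict δ)
        (MvPowerSeries.coeff γ (∏ i, A i ^ δ i))
    else 0

lemma pairL_wrep (A : Fin (n+1) → MvPowerSeries (Fin m) 𝕂) (γ : Fin m →₀ ℕ)
    (c : Fin d × (Fin n →₀ ℕ) → 𝕂) :
    pairL 𝕂 _ (wrep 𝕂 d n A γ) c
      = MvPowerSeries.coeff γ (msubst A (Dser 𝕂 d n c)) := by
  classical
  rw [wrep, map_sum, LinearMap.sum_apply, MvPowerSeries.coeff_apply, msubst]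
  refine Finset.sum_congr rfl fun δ hδ => ?_
  by_cases he : δ (Fin.last n) < d
  · rw [dif_pos he, pairL_single]
    have hD : MvPowerSeries.coeff δ (Dser 𝕂 d n c)
        = c (⟨d - 1 - δ (Fin.last n), by omega⟩, finRestrict δ) := by
      show Dser 𝕂 d n c δ = _
      rw [Dser, dif_pos he]
    rw [hD, mul_comm]
  · rw [dif_neg he]
    have hD : MvPowerSeries.coeff δ (Dser 𝕂 d n c) = 0 := by
      show Dser 𝕂 d n c δ = 0
      rw [Dser, dif_neg he]
    rw [hD, zero_mul]
    simp

end LinAlg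

end ChevAux

/-- **Chevalley approximation.** Let `φ : 𝕂⟦x₁,…,xₙ,y⟧ → 𝕂⟦u₁,…,u_m⟧` be a morphism of formal
power series rings and suppose that the distinguished monic polynomial
`f = y^d + a₁(x) y^{d-1} + ⋯ + a_d(x)`, with `a_i(0) = 0`, generates `ker φ`. Then `f` is the
unique such element of `ker φ`, and there is a function `μ : ℕ → ℕ` such that any
`g = y^d + b₁(x) y^{d-1} + ⋯ + b_d(x)` with `b_i(0) = 0` and `φ(g) ∈ (u)^{μ(k)}` has the same
coefficients as `f` up to degree `k`. -/
theorem chevalley_approximation (𝕂 : Type) [Field 𝕂] (m n d : ℕ)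
    (φ : MvPowerSeries (Fin (n+1)) 𝕂 →+* MvPowerSeries (Fin m) 𝕂)
    (hconst : ∀ i, MvPowerSeries.constantCoeff (φ (MvPowerSeries.X i)) = 0)
    (hsubst : ∀ G, φ G = msubst (fun i => φ (MvPowerSeries.X i)) G)
    (a : Fin d → (Fin n →₀ ℕ) → 𝕂) (ha0 : ∀ i, a i 0 = 0)
    (hgen : RingHom.ker φ = Ideal.span {wpoly d a}) :
    (∀ b : Fin d → (Fin n →₀ ℕ) → 𝕂, (∀ i, b i 0 = 0) → φ (wpoly d b) = 0 →
      wpoly d b = wpoly d a) ∧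
    ∃ μ : ℕ → ℕ, ∀ k : ℕ, ∀ b : Fin d → (Fin n →₀ ℕ) → 𝕂, (∀ i, b i 0 = 0) →
      φ (wpoly d b) ∈
        (Ideal.span (Set.range (MvPowerSeries.X : Fin m → MvPowerSeries (Fin m) 𝕂))) ^ (μ k) →
      ∀ (i : Fin d) (β : Fin n →₀ ℕ), (β.sum fun _ e => e) ≤ k → b i β = a i β := by
  classical
  have hfker : φ (wpoly d a) = 0 := by
    have hmem : wpoly d a ∈ RingHom.ker φ := by
      rw [hgen]; exact Ideal.subset_span (Set.mem_singleton _)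
    rwa [RingHom.mem_ker] at hmem
  have hbridge : ∀ b : Fin d → (Fin n →₀ ℕ) → 𝕂, ∀ γ : Fin m →₀ ℕ,
      MvPowerSeries.coeff γ (φ (wpoly d b))
        = ChevAux.pairL 𝕂 _ (ChevAux.wrep 𝕂 d n (fun i => φ (MvPowerSeries.X i)) γ)
            (fun p => b p.1 p.2 - a p.1 p.2) := by
    intro b γ
    rw [ChevAux.pairL_wrep]
    have heq : φ (wpoly d b) = msubst (fun i => φ (MvPowerSeries.X i))
        (ChevAux.Dser 𝕂 d n (fun p => b p.1 p.2 - a p.1 p.2)) := by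
      rw [ChevAux.wpoly_decomp b a, map_add, hfker, zero_add, hsubst]
    rw [heq]
  have hsep : ∀ c : Fin d × (Fin n →₀ ℕ) → 𝕂,
      (∀ γ, ChevAux.pairL 𝕂 _
        (ChevAux.wrep 𝕂 d n (fun i => φ (MvPowerSeries.X i)) γ) c = 0) → c = 0 := by
    intro c hc
    have hφ0 : φ (ChevAux.Dser 𝕂 d n c) = 0 := by
      refine MvPowerSeries.ext fun γ => ?_
      have hγ := hc γ
      rw [ChevAux.pairL_wrep] at hγ
      rw [map_zero, hsubst]
      exact hγ
    have hker : ChevAux.Dser 𝕂 d n c ∈ RingHom.ker φ := by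
      rwa [RingHom.mem_ker]
    rw [hgen, Ideal.mem_span_singleton] at hker
    obtain ⟨h, hh⟩ := hker
    have h0 : h = 0 := by
      refine ChevAux.eq_zero_of_mul_wpoly ha0 (h := h) fun γ hγ => ?_
      rw [← hh]
      show ChevAux.Dser 𝕂 d n c γ = 0
      rw [ChevAux.Dser, dif_neg (by omega)]
    rw [h0, mul_zero] at hh
    exact ChevAux.Dser_inj0 c hh
  constructor
  · intro b hb0 hb
    have hz : ∀ γ, ChevAux.pairL 𝕂 _
        (ChevAux.wrep 𝕂 d n (fun i => φ (MvPowerSeries.X i)) γ)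
        (fun p => b p.1 p.2 - a p.1 p.2) = 0 := fun γ => by
      rw [← hbridge b γ, hb, map_zero]
    have hc0 := hsep _ hz
    have hba : b = a := by
      funext i β
      have := congrFun hc0 (i, β)
      simpa [sub_eq_zero] using this
    rw [hba]
  · have hspan := ChevAux.span_pair_top
      (ChevAux.wrep 𝕂 d n (fun i => φ (MvPowerSeries.X i))) hsep
    have hmem1 : ∀ p : Fin d × (Fin n →₀ ℕ),
        (Finsupp.single p (1:𝕂)) ∈ Submodule.span 𝕂
          (Set.range (ChevAux.wrep 𝕂 d n (fun i => φ (MvPowerSeries.X i)))) := by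
      intro p; rw [hspan]; trivial
    choose κ hκ using fun p => Finsupp.mem_span_range_iff_exists_finsupp.mp (hmem1 p)
    refine ⟨fun k => (Finset.univ ×ˢ Finset.Iic (expBound n k)).sup
      (fun p => ((κ p).support.sup ChevAux.tdeg) + 1), ?_⟩
    intro k b hb0 hmemb i β hβ
    have hpmem : ((i, β) : Fin d × (Fin n →₀ ℕ)) ∈
        Finset.univ ×ˢ Finset.Iic (expBound n k) := by
      rw [Finset.mem_product]
      refine ⟨Finset.mem_univ _, Finset.mem_Iic.mpr ?_⟩
      rw [Finsupp.le_def]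
      intro j
      show β j ≤ expBound n k j
      have h1 : β j ≤ ChevAux.tdeg β := ChevAux.apply_le_tdeg β j
      have h2 : expBound n k j = k := by
        simp [expBound]
      have h3 : ChevAux.tdeg β ≤ k := hβ
      omega
    have hNle : ((κ (i,β)).support.sup ChevAux.tdeg) + 1 ≤
        (Finset.univ ×ˢ Finset.Iic (expBound n k)).sup
          (fun p => ((κ p).support.sup ChevAux.tdeg) + 1) :=
      Finset.le_sup (f := fun p => ((κ p).support.sup ChevAux.tdeg) + 1) hpmem
    have hcz : ∀ γ ∈ (κ (i,β)).support,
        ChevAux.pairL 𝕂 _ (ChevAux.wrep 𝕂 d n (fun i => φ (MvPowerSeries.X i)) γ)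
          (fun p => b p.1 p.2 - a p.1 p.2) = 0 := by
      intro γ hγ
      rw [← hbridge b γ]
      refine ChevAux.coeff_eq_zero_of_mem_pow hmemb ?_
      show ChevAux.tdeg γ < (Finset.univ ×ˢ Finset.Iic (expBound n k)).sup
        (fun p => ((κ p).support.sup ChevAux.tdeg) + 1)
      have hle := Finset.le_sup (f := ChevAux.tdeg) hγ
      omega
    have hc : b i β - a i β = 0 := by
      have h1 : ChevAux.pairL 𝕂 _ (Finsupp.single ((i,β) : Fin d × (Fin n →₀ ℕ)) (1:𝕂))
          (fun p => b p.1 p.2 - a p.1 p.2) = b i β - a i β := by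
        rw [ChevAux.pairL_single, one_mul]
      rw [← hκ (i,β)] at h1
      simp only [Finsupp.sum] at h1
      rw [map_sum, LinearMap.sum_apply] at h1
      rw [← h1]
      refine Finset.sum_eq_zero fun γ hγ => ?_
      rw [map_smul, LinearMap.smul_apply, hcz γ hγ, smul_zero]
    exact sub_eq_zero.mp hc


end Paper
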